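/- Let π ∈ ℝ and let v ∈ ℝ³ with v ≠ 0. Consider the function f(a) = |a|³/3 + 1/(v·a) + π (v·a) on the set A = {a ∈ ℝ³ : v·a > 0}. Then f attains its infimum over A, the minimum point is unique, and it equals ā = t⋆ v/|v| with t⋆ = √( ( √(4|v| + π²|v|⁴) − π|v|² ) / (2|v|) ); moreover ā is the unique element a ∈ A satisfying the criticality system |a| a = ( (v·a)^{−2} − π ) v. -/

import Mathlib

noncomputable section

/-- The Euclidean norm on `ℝ³`. -/
def enr (v : Fin 3 → ℝ) : ℝ := Real.sqrt (∑ i, (v i) ^ 2)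

/-- The Euclidean scalar product on `ℝ³`. -/
def dot (v a : Fin 3 → ℝ) : ℝ := ∑ i, v i * a i

/-- The function `f(a) = |a|³/3 + 1/(v·a) + π (v·a)`. -/
def fpv (π : ℝ) (v a : Fin 3 → ℝ) : ℝ :=
  (enr a) ^ 3 / 3 + 1 / dot v a + π * dot v a

/-- The optimal radius `t⋆`. -/
def tstar (π : ℝ) (v : Fin 3 → ℝ) : ℝ :=
  Real.sqrt ((Real.sqrt (4 * enr v + π ^ 2 * (enr v) ^ 4) - π * (enr v) ^ 2) / (2 * enr v))

/-- The candidate minimizer `ā = t⋆ v / |v|`. -/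
def abar (π : ℝ) (v : Fin 3 → ℝ) : Fin 3 → ℝ := (tstar π v / enr v) • v

/-- Auxiliary: view a vector as an element of `EuclideanSpace`. -/
def toE (a : Fin 3 → ℝ) : EuclideanSpace ℝ (Fin 3) := (WithLp.equiv 2 (Fin 3 → ℝ)).symm a

lemma enr_eq_norm (a : Fin 3 → ℝ) : enr a = ‖toE a‖ := by
  simp [enr, toE, EuclideanSpace.norm_eq, Real.norm_eq_abs, sq_abs]

lemma dot_eq_inner (v a : Fin 3 → ℝ) : dot v a = inner ℝ (toE v) (toE a) := by
  simp [dot, toE, PiLp.inner_apply, RCLike.inner_apply, mul_comm]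

lemma enr_nonneg (a : Fin 3 → ℝ) : 0 ≤ enr a := Real.sqrt_nonneg _

lemma enr_pos (v : Fin 3 → ℝ) (hv : v ≠ 0) : 0 < enr v := by
  rw [enr_eq_norm]
  have : toE v ≠ 0 := by
    intro h; apply hv
    have := congrArg (WithLp.equiv 2 (Fin 3 → ℝ)) h
    simpa [toE] using this
  exact norm_pos_iff.mpr this

lemma enr_smul (c : ℝ) (a : Fin 3 → ℝ) : enr (c • a) = |c| * enr a := by
  have : toE (c • a) = c • toE a := rfl
  rw [enr_eq_norm, this, norm_smul, enr_eq_norm, Real.norm_eq_abs]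

lemma dot_smul_right (v : Fin 3 → ℝ) (c : ℝ) (a : Fin 3 → ℝ) :
    dot v (c • a) = c * dot v a := by
  simp only [dot, Finset.mul_sum, Pi.smul_apply, smul_eq_mul]
  exact Finset.sum_congr rfl fun i _ => by ring

lemma dot_self (v : Fin 3 → ℝ) : dot v v = enr v ^ 2 := by
  rw [enr, Real.sq_sqrt (by positivity)]
  simp [dot, sq]

lemma cs (v a : Fin 3 → ℝ) : dot v a ≤ enr v * enr a := by
  rw [dot_eq_inner, enr_eq_norm, enr_eq_norm]
  exact real_inner_le_norm _ _

lemma cs_eq (v a : Fin 3 → ℝ) (h : dot v a = enr v * enr a) : enr a • v = enr v • a := by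
  rw [dot_eq_inner, enr_eq_norm, enr_eq_norm] at h
  have := (inner_eq_norm_mul_iff_real).mp h
  rw [enr_eq_norm, enr_eq_norm]
  have := congrArg (WithLp.equiv 2 (Fin 3 → ℝ)) this
  simpa [toE] using this

lemma key_t (π V T : ℝ) (hV : 0 < V)
    (hT : T = Real.sqrt ((Real.sqrt (4 * V + π ^ 2 * V ^ 4) - π * V ^ 2) / (2 * V))) :
    0 < T ∧ T ^ 4 * V + π * T ^ 2 * V ^ 2 = 1 := by
  set D := Real.sqrt (4 * V + π ^ 2 * V ^ 4) with hD
  have hDsq : D ^ 2 = 4 * V + π ^ 2 * V ^ 4 := Real.sq_sqrt (by positivity)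
  have hDnn : 0 ≤ D := Real.sqrt_nonneg _
  have hDgt : π * V ^ 2 < D := by nlinarith [sq_nonneg (π * V ^ 2 - D)]
  have hnum : 0 < (D - π * V ^ 2) / (2 * V) := div_pos (by linarith) (by linarith)
  have hT2 : T ^ 2 = (D - π * V ^ 2) / (2 * V) := by
    rw [hT]; exact Real.sq_sqrt hnum.le
  have hTpos : 0 < T := by rw [hT]; exact Real.sqrt_pos.mpr hnum
  refine ⟨hTpos, ?_⟩
  have h4 : T ^ 4 = ((D - π * V ^ 2) / (2 * V)) ^ 2 := by
    rw [show T ^ 4 = (T ^ 2) ^ 2 by ring, hT2]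
  rw [h4, hT2]
  field_simp
  nlinarith [hDsq]

lemma g_key (π V c s : ℝ) (hV : 0 < V) (hc : 0 < c) (hs : 0 < s)
    (hrel : π * c ^ 2 * V ^ 3 = V ^ 3 - c ^ 4) :
    (s ^ 3 / (3 * V ^ 3) + 1 / s + π * s) - (c ^ 3 / (3 * V ^ 3) + 1 / c + π * c)
      = (s - c) ^ 2 * ((s + 2 * c) / (3 * V ^ 3) + 1 / (s * c ^ 2)) := by
  have hπ : π = (V ^ 3 - c ^ 4) / (c ^ 2 * V ^ 3) := by field_simp; linarith
  rw [hπ]; field_simp; ring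

lemma g_ge (π V c s : ℝ) (hV : 0 < V) (hc : 0 < c) (hs : 0 < s)
    (hrel : π * c ^ 2 * V ^ 3 = V ^ 3 - c ^ 4) :
    c ^ 3 / (3 * V ^ 3) + 1 / c + π * c ≤ s ^ 3 / (3 * V ^ 3) + 1 / s + π * s := by
  have h := g_key π V c s hV hc hs hrel
  have hpos : (0:ℝ) ≤ (s - c) ^ 2 * ((s + 2 * c) / (3 * V ^ 3) + 1 / (s * c ^ 2)) := by positivity
  linarith

lemma g_eq (π V c s : ℝ) (hV : 0 < V) (hc : 0 < c) (hs : 0 < s)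
    (hrel : π * c ^ 2 * V ^ 3 = V ^ 3 - c ^ 4)
    (heq : s ^ 3 / (3 * V ^ 3) + 1 / s + π * s = c ^ 3 / (3 * V ^ 3) + 1 / c + π * c) :
    s = c := by
  have h := g_key π V c s hV hc hs hrel
  rw [heq, sub_self] at h
  have hpos : (0:ℝ) < (s + 2 * c) / (3 * V ^ 3) + 1 / (s * c ^ 2) := by positivity
  have h0 : (s - c) ^ 2 = 0 := by
    rcases mul_eq_zero.mp h.symm with h' | h'
    · exact h'
    · linarith
  have := pow_eq_zero_iff (n := 2) (by norm_num) |>.mp h0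
  linarith

/-- On `A = {a : v·a > 0}`, the function `f` attains its infimum at the unique minimum point
`ā = t⋆ v/|v|`, which is also the unique solution in `A` of the criticality system
`|a| a = ((v·a)⁻² − π) v`. -/
theorem stmt10 (π : ℝ) (v : Fin 3 → ℝ) (hv : v ≠ 0) :
    0 < dot v (abar π v) ∧
    (∀ a : Fin 3 → ℝ, 0 < dot v a → fpv π v (abar π v) ≤ fpv π v a) ∧
    (∀ a : Fin 3 → ℝ, 0 < dot v a →
      (∀ b : Fin 3 → ℝ, 0 < dot v b → fpv π v a ≤ fpv π v b) → a = abar π v) ∧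
    (enr (abar π v) • abar π v = (((dot v (abar π v)) ^ 2)⁻¹ - π) • v) ∧
    (∀ a : Fin 3 → ℝ, 0 < dot v a →
      enr a • a = (((dot v a) ^ 2)⁻¹ - π) • v → a = abar π v) := by
  have hV : 0 < enr v := enr_pos v hv
  set V := enr v with hVdef
  set T := tstar π v with hTdef
  obtain ⟨hT, hkey⟩ := key_t π V T hV rfl
  clear_value V T
  have hdotbar : dot v (abar π v) = T * V := by
    rw [abar, dot_smul_right, dot_self, ← hVdef, ← hTdef]
    field_simp
  have henrbar : enr (abar π v) = T := by
    rw [abar, enr_smul, ← hVdef, ← hTdef, abs_of_pos (by positivity)]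
    field_simp
  set c := T * V with hcdef
  clear_value c
  have hc : 0 < c := by rw [hcdef]; exact mul_pos hT hV
  have hrel : π * c ^ 2 * V ^ 3 = V ^ 3 - c ^ 4 := by
    rw [hcdef]
    linear_combination V ^ 3 * hkey
  have hfbar : fpv π v (abar π v) = c ^ 3 / (3 * V ^ 3) + 1 / c + π * c := by
    rw [fpv, henrbar, hdotbar]
    have hTc : T = c / V := by rw [hcdef]; field_simp
    rw [hTc]
    field_simp
  have hlb : ∀ a : Fin 3 → ℝ, 0 < dot v a →
      (dot v a) ^ 3 / (3 * V ^ 3) + 1 / dot v a + π * dot v a ≤ fpv π v a := by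
    intro a ha
    have hcs : dot v a ≤ V * enr a := by rw [hVdef]; exact cs v a
    have hena : dot v a / V ≤ enr a := by rw [div_le_iff₀ hV]; linarith
    have h3 : (dot v a / V) ^ 3 ≤ enr a ^ 3 := pow_le_pow_left₀ (by positivity) hena 3
    rw [fpv]
    have he : (dot v a) ^ 3 / (3 * V ^ 3) = (dot v a / V) ^ 3 / 3 := by
      field_simp
    rw [he]
    linarith
  have hpos : 0 < dot v (abar π v) := by rw [hdotbar]; exact hc
  refine ⟨hpos, ?_, ?_, ?_, ?_⟩
  · intro a ha
    have h1 := hlb a ha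
    have h2 := g_ge π V c (dot v a) hV hc ha hrel
    rw [hfbar]; linarith
  · intro a ha hmin
    have hmin' := hmin (abar π v) hpos
    rw [hfbar] at hmin'
    have h1 := hlb a ha
    have h2 := g_ge π V c (dot v a) hV hc ha hrel
    have hgs : (dot v a) ^ 3 / (3 * V ^ 3) + 1 / dot v a + π * dot v a
        = c ^ 3 / (3 * V ^ 3) + 1 / c + π * c := by linarith
    have hfa : fpv π v a = (dot v a) ^ 3 / (3 * V ^ 3) + 1 / dot v a + π * dot v a := by
      linarith
    have hsc : dot v a = c := g_eq π V c (dot v a) hV hc ha hrel hgs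
    have hcube : enr a ^ 3 = (dot v a / V) ^ 3 := by
      have he : (dot v a) ^ 3 / (3 * V ^ 3) = (dot v a / V) ^ 3 / 3 := by
        field_simp
      rw [fpv, he] at hfa
      linarith
    have hena : enr a = dot v a / V := by
      have h1' : 0 ≤ enr a := enr_nonneg a
      have h2' : 0 ≤ dot v a / V := by positivity
      rcases lt_trichotomy (enr a) (dot v a / V) with h | h | h
      · have := pow_lt_pow_left₀ h h1' (n := 3) (by norm_num)
        linarith
      · exact h
      · have := pow_lt_pow_left₀ h h2' (n := 3) (by norm_num)
        linarith
    have hcseq : dot v a = enr v * enr a := by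
      rw [hena, ← hVdef]; field_simp
    have heq := cs_eq v a hcseq
    have hVne : V ≠ 0 := ne_of_gt hV
    have haform : a = (enr a / V) • v := by
      have h' : V • a = enr a • v := by rw [hVdef]; exact heq.symm
      have h'' := congrArg (fun x => V⁻¹ • x) h'
      simp only [smul_smul, inv_mul_cancel₀ hVne, one_smul] at h''
      rw [div_eq_inv_mul]
      exact h''
    rw [haform, hena, hsc, abar, ← hVdef, ← hTdef]
    congr 1
    rw [hcdef]
    field_simp
  · rw [henrbar, hdotbar, abar, ← hVdef, ← hTdef, smul_smul]
    congr 1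
    rw [hcdef]
    have hTne : T ≠ 0 := ne_of_gt hT
    have hVne : V ≠ 0 := ne_of_gt hV
    field_simp
    nlinarith [hkey]
  · intro a ha hcrit
    have ha0 : a ≠ 0 := by rintro rfl; simp [dot] at ha
    have hna : 0 < enr a := enr_pos a ha0
    set μ := ((dot v a) ^ 2)⁻¹ - π with hμdef
    clear_value μ
    set lam := μ / enr a with hlamdef
    clear_value lam
    have haeq : a = lam • v := by
      have h'' := congrArg (fun x => (enr a)⁻¹ • x) hcrit
      simp only [smul_smul, inv_mul_cancel₀ (ne_of_gt hna), one_smul] at h''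
      rw [hlamdef, div_eq_inv_mul]
      exact h''
    have hs_eq : dot v a = lam * V ^ 2 := by
      conv_lhs => rw [haeq]
      rw [dot_smul_right, dot_self, ← hVdef]
    have hlampos : 0 < lam := by
      have h' : 0 < lam * V ^ 2 := hs_eq ▸ ha
      nlinarith [sq_nonneg V]
    have hnaeq : enr a = lam * V := by
      conv_lhs => rw [haeq]
      rw [enr_smul, ← hVdef, abs_of_pos hlampos]
    -- coefficient identity
    have hcoef : (enr a * lam) • v = μ • v := by
      rw [← smul_smul, ← haeq]
      exact hcrit
    have hco : enr a * lam = μ := by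
      have h2 : (enr a * lam - μ) • v = (0 : Fin 3 → ℝ) := by
        rw [sub_smul, hcoef, sub_self]
      rcases smul_eq_zero.mp h2 with h | h
      · linarith [sub_eq_zero.mp h]
      · exact absurd h hv
    set t := enr a with htdef
    clear_value t
    have hVne : V ≠ 0 := ne_of_gt hV
    have htne : t ≠ 0 := ne_of_gt hna
    have hlamt : lam = t / V := by
      rw [eq_div_iff hVne]
      linarith [hnaeq]
    have heq1 : t ^ 4 * V + π * t ^ 2 * V ^ 2 = 1 := by
      have hds : dot v a = t * V := by
        rw [hs_eq, hnaeq]; ring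
      have hμ2 : μ = ((t * V) ^ 2)⁻¹ - π := by rw [hμdef, hds]
      have h3 : t * (t / V) = ((t * V) ^ 2)⁻¹ - π := by
        rw [← hlamt, hco, hμ2]
      field_simp at h3
      have h4 : V * (t ^ 4 * V + π * t ^ 2 * V ^ 2 - 1) = 0 := by linear_combination V * h3
      rcases mul_eq_zero.mp h4 with h | h
      · exact absurd h hVne
      · linarith
    have hfac : (t ^ 2 - T ^ 2) * (V * t ^ 2 * T ^ 2 + 1) = 0 := by
      linear_combination T ^ 2 * heq1 - t ^ 2 * hkey
    have ht2 : t ^ 2 = T ^ 2 := by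
      rcases mul_eq_zero.mp hfac with h | h
      · linarith [sub_eq_zero.mp h]
      · have hp : (0:ℝ) < V * t ^ 2 * T ^ 2 + 1 := by positivity
        linarith
    have htT : t = T := by
      have hft : (t - T) * (t + T) = 0 := by linear_combination ht2
      rcases mul_eq_zero.mp hft with h | h
      · linarith
      · linarith
    have hlamT : lam = T / V := by rw [hlamt, htT]
    rw [haeq, hlamT, abar, ← hVdef, ← hTdef]
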